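/- For α < −1, the involution s = (1−w)/(1+αw) transforms the integral and yields −∫_{(α−4−√(α²−8α))/(2α)}^{1} ds/√(s(1−s)(α²s²+α(4−α)s+4)) = ∫₀^{(α−4+√(α²−8α))/(2α)} dw/√(w(1−w)(α²w²+α(4−α)w+4)). -/

import Mathlib

open Real intervalIntegral MeasureTheory Set

lemma integrable_one_div_sqrt_sub {c m : ℝ} (hcm : c < m) :
    IntegrableOn (fun u => 1 / Real.sqrt (u - c)) (Set.Ioc c m) := by
  have h0 : IntervalIntegrable (fun x : ℝ => x ^ (-(1/2) : ℝ)) volume 0 (m - c) :=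
    intervalIntegrable_rpow' (by norm_num)
  have h1 := h0.comp_sub_right c
  rw [zero_add, sub_add_cancel] at h1
  rw [intervalIntegrable_iff_integrableOn_Ioc_of_le hcm.le] at h1
  refine h1.congr_fun (fun u hu => ?_) measurableSet_Ioc
  beta_reduce
  rw [Real.rpow_neg (by linarith [hu.1] : (0:ℝ) ≤ u - c), ← Real.sqrt_eq_rpow, one_div]

lemma integrable_one_div_sqrt_sub' {m e : ℝ} (hme : m < e) :
    IntegrableOn (fun u => 1 / Real.sqrt (e - u)) (Set.Ioc m e) := by
  have h0 : IntervalIntegrable (fun x : ℝ => x ^ (-(1/2) : ℝ)) volume 0 (e - m) :=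
    intervalIntegrable_rpow' (by norm_num)
  have h1 := (h0.comp_sub_left e).symm
  rw [sub_zero, sub_sub_cancel] at h1
  rw [intervalIntegrable_iff_integrableOn_Ioc_of_le hme.le] at h1
  refine h1.congr_fun (fun u hu => ?_) measurableSet_Ioc
  beta_reduce
  rw [Real.rpow_neg (by linarith [hu.2] : (0:ℝ) ≤ e - u), ← Real.sqrt_eq_rpow, one_div]

lemma integrable_helper {c e K : ℝ} (hce : c < e) (hK : 0 < K) {F : ℝ → ℝ}
    (hFc : Continuous F) (hF : ∀ u ∈ Set.Ioo c e, K * ((u - c) * (e - u)) ≤ F u) :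
    IntegrableOn (fun u => 1 / Real.sqrt (F u)) (Set.Icc c e) := by
  have hmeasG : ∀ s : Set ℝ, AEStronglyMeasurable (fun u => 1 / Real.sqrt (F u))
      (volume.restrict s) := by
    intro s
    simp only [one_div]
    exact ((Real.continuous_sqrt.comp hFc).measurable.inv).aestronglyMeasurable
  rw [integrableOn_Icc_iff_integrableOn_Ioo]
  set m := (c + e) / 2 with hm
  have hcm : c < m := by simp only [hm]; linarith
  have hme : m < e := by simp only [hm]; linarith
  rw [← Set.Ioc_union_Ioo_eq_Ioo hcm.le hme]
  apply IntegrableOn.union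
  · -- near c, on Ioc c m
    set B := K * (e - m) with hB
    have hB0 : 0 < B := by rw [hB]; exact mul_pos hK (sub_pos.2 hme)
    refine Integrable.mono ((integrable_one_div_sqrt_sub hcm).const_mul
      (1 / Real.sqrt B)) (hmeasG _) (ae_restrict_of_forall_mem measurableSet_Ioc ?_)
    intro u hu
    have huc : 0 < u - c := by linarith [hu.1]
    have hFl : B * (u - c) ≤ F u := by
      have h2 := hF u ⟨hu.1, lt_of_le_of_lt hu.2 hme⟩
      nlinarith [h2, hB, mul_nonneg (mul_pos hK huc).le
        (by linarith [hu.2] : (0:ℝ) ≤ (e - u) - (e - m))]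
    have hBu : 0 < B * (u - c) := by positivity
    rw [Real.norm_eq_abs, Real.norm_eq_abs,
      abs_of_nonneg (one_div_nonneg.2 (Real.sqrt_nonneg _)),
      abs_of_nonneg (mul_nonneg (one_div_nonneg.2 (Real.sqrt_nonneg _))
        (one_div_nonneg.2 (Real.sqrt_nonneg _)))]
    have h1 : 1 / Real.sqrt (F u) ≤ 1 / Real.sqrt (B * (u - c)) :=
      one_div_le_one_div_of_le (Real.sqrt_pos.2 hBu) (Real.sqrt_le_sqrt hFl)
    rwa [Real.sqrt_mul hB0.le, ← one_div_mul_one_div] at h1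
  · -- near e, on Ioo m e
    set B := K * (m - c) with hB
    have hB0 : 0 < B := by rw [hB]; exact mul_pos hK (sub_pos.2 hcm)
    refine Integrable.mono (((integrable_one_div_sqrt_sub' hme).mono_set
      Set.Ioo_subset_Ioc_self).const_mul (1 / Real.sqrt B)) (hmeasG _)
      (ae_restrict_of_forall_mem measurableSet_Ioo ?_)
    intro u hu
    have hue : 0 < e - u := by linarith [hu.2]
    have hFl : B * (e - u) ≤ F u := by
      have h2 := hF u ⟨lt_trans hcm hu.1, hu.2⟩
      nlinarith [h2, hB, mul_nonneg (mul_pos hK hue).le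
        (by linarith [hu.1] : (0:ℝ) ≤ (u - c) - (m - c))]
    have hBu : 0 < B * (e - u) := by positivity
    rw [Real.norm_eq_abs, Real.norm_eq_abs,
      abs_of_nonneg (one_div_nonneg.2 (Real.sqrt_nonneg _)),
      abs_of_nonneg (mul_nonneg (one_div_nonneg.2 (Real.sqrt_nonneg _))
        (one_div_nonneg.2 (Real.sqrt_nonneg _)))]
    have h1 : 1 / Real.sqrt (F u) ≤ 1 / Real.sqrt (B * (e - u)) :=
      one_div_le_one_div_of_le (Real.sqrt_pos.2 hBu) (Real.sqrt_le_sqrt hFl)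
    rwa [Real.sqrt_mul hB0.le, ← one_div_mul_one_div] at h1

set_option maxHeartbeats 1600000 in
theorem involution_identity (α : ℝ) (h : α < -1) :
    -∫ s in ((α - 4 - Real.sqrt (α ^ 2 - 8 * α)) / (2 * α))..1,
        1 / Real.sqrt (s * (1 - s) * (α ^ 2 * s ^ 2 + α * (4 - α) * s + 4)) =
      ∫ w in (0 : ℝ)..((α - 4 + Real.sqrt (α ^ 2 - 8 * α)) / (2 * α)),
        1 / Real.sqrt (w * (1 - w) * (α ^ 2 * w ^ 2 + α * (4 - α) * w + 4)) := by
  have hα0 : α < 0 := by linarith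
  have hα2 : (0:ℝ) < α ^ 2 := by nlinarith
  have hdisc : 0 < α ^ 2 - 8 * α := by nlinarith [sq_nonneg α]
  set g : ℝ → ℝ := fun s => 1 / Real.sqrt (s * (1 - s) * (α ^ 2 * s ^ 2 + α * (4 - α) * s + 4))
    with hg_def
  set d := Real.sqrt (α ^ 2 - 8 * α) with hd_def
  have hd2 : d ^ 2 = α ^ 2 - 8 * α := by rw [hd_def]; exact Real.sq_sqrt hdisc.le
  have hd0 : 0 < d := by rw [hd_def]; exact Real.sqrt_pos.2 hdisc
  set a := (α - 4 - d) / (2 * α) with ha_def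
  set b := (α - 4 + d) / (2 * α) with hb_def
  set φ : ℝ → ℝ := fun w => (1 - w) / (1 + α * w) with hφ_def
  set φd : ℝ → ℝ := fun w => -(1 + α) / (1 + α * w) ^ 2 with hφd_def
  clear_value g d a b φ φd
  have h2α : 2 * α < 0 := by linarith
  have hdgt : ∀ z : ℝ, z ^ 2 < α ^ 2 - 8 * α → z < d := by
    intro z hz
    rcases le_or_gt z 0 with hz0 | hz0
    · linarith [hd0]
    · nlinarith [hd2, hd0]
  have h4α : (0:ℝ) < 4 - α := by linarith
  have hdlt : d < 4 - α := by nlinarith [hd2, hd0, h4α]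
  have hdgt1 : α + 4 < d := hdgt _ (by nlinarith)
  have hdgt2 : 2 - α < d := hdgt _ (by nlinarith)
  have hdgt3 : -α - 4 < d := hdgt _ (by nlinarith)
  have ha_lin : 2 * α * a = α - 4 - d := by rw [ha_def]; field_simp [h2α.ne, hα0.ne]
  have hb_lin : 2 * α * b = α - 4 + d := by rw [hb_def]; field_simp [h2α.ne, hα0.ne]
  have hb0 : 0 < b := by
    rw [hb_def]; exact div_pos_iff.mpr (Or.inr ⟨by linarith, h2α⟩)
  have hb1 : b < 1 := by nlinarith [hb_lin]
  have ha1 : 1 < a := by nlinarith [ha_lin]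
  have htb : 0 < 1 + α * b := by linarith [hb_lin]
  have ht : ∀ w : ℝ, 0 ≤ w → w ≤ b → 0 < 1 + α * w := by
    intro w h0w hwb
    nlinarith [htb, mul_nonneg (by linarith : (0:ℝ) ≤ -α) (by linarith : (0:ℝ) ≤ b - w)]
  have hab : α ^ 2 * (a * b) = 4 := by
    nlinarith [ha_lin, hb_lin, hd2]
  have hsum : α * (a + b) = α - 4 := by linarith [ha_lin, hb_lin]
  have hQ : ∀ u : ℝ, α ^ 2 * u ^ 2 + α * (4 - α) * u + 4 = α ^ 2 * ((u - a) * (u - b)) := by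
    intro u
    linear_combination (α * u) * hsum - hab
  have haα : a * α + 1 < 0 := by nlinarith [ha_lin]
  have hφb_mul : 1 - b = a * (1 + α * b) := by
    have key : α * (1 - b) = α * (a * (1 + α * b)) := by linear_combination -hsum - hab
    exact mul_left_cancel₀ (by linarith : α ≠ 0) key
  have hderiv : ∀ w : ℝ, 1 + α * w ≠ 0 → HasDerivAt φ (φd w) w := by
    intro w hw
    have h1 : HasDerivAt (fun w : ℝ => 1 - w) (-1) w := by
      simpa using (hasDerivAt_id w).const_sub 1
    have h2 : HasDerivAt (fun w : ℝ => 1 + α * w) α w := by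
      simpa using ((hasDerivAt_id w).const_mul α).const_add 1
    have h3 := h1.div h2 hw
    simp only [hφ_def, hφd_def]
    refine h3.congr_deriv ?_
    ring
  have hmapsIcc : ∀ w ∈ Set.Icc (0:ℝ) b, φ w ∈ Set.Icc 1 a := by
    intro w hw
    have htw := ht w hw.1 hw.2
    constructor
    · rw [hφ_def]
      rw [le_div_iff₀ htw]
      nlinarith [mul_nonneg hw.1 (by linarith : (0:ℝ) ≤ -(1 + α))]
    · rw [hφ_def]
      rw [div_le_iff₀ htw]
      nlinarith [hφb_mul, mul_nonneg (by linarith [hw.2] : (0:ℝ) ≤ b - w)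
        (by linarith : (0:ℝ) ≤ -(a * α + 1))]
  have hmapsIoo : ∀ w ∈ Set.Ioo (0:ℝ) b, φ w ∈ Set.Ioo 1 a := by
    intro w hw
    have htw := ht w hw.1.le hw.2.le
    constructor
    · rw [hφ_def, lt_div_iff₀ htw]
      nlinarith [mul_pos hw.1 (by linarith : (0:ℝ) < -(1 + α))]
    · rw [hφ_def, div_lt_iff₀ htw]
      nlinarith [hφb_mul, mul_pos (by linarith [hw.2] : (0:ℝ) < b - w)
        (by linarith : (0:ℝ) < -(a * α + 1))]
  have hc_inner : Continuous (fun s : ℝ => s * (1 - s) * (α ^ 2 * s ^ 2 + α * (4 - α) * s + 4)) := by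
    continuity
  have hPpos : ∀ u ∈ Set.Ioo (1:ℝ) a, 0 < u * (1 - u) * (α ^ 2 * u ^ 2 + α * (4 - α) * u + 4) := by
    intro u hu
    have key : u * (1 - u) * (α ^ 2 * ((u - a) * (u - b))) =
        α ^ 2 * ((u - 1) * (a - u) * (u - b) * u) := by ring
    rw [hQ u, key]
    exact mul_pos hα2 (mul_pos (mul_pos (mul_pos (by linarith [hu.1] : (0:ℝ) < u - 1)
      (by linarith [hu.2] : (0:ℝ) < a - u)) (by linarith [hu.1] : (0:ℝ) < u - b))
      (by linarith [hu.1] : (0:ℝ) < u))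
  -- integrability on [1, a]
  have hint1 : IntegrableOn g (Set.Icc 1 a) := by
    rw [hg_def]
    apply integrable_helper ha1 (mul_pos hα2 (by linarith : (0:ℝ) < 1 - b)) hc_inner
    intro u hu
    rw [hQ u]
    have e1 : u * (1 - u) * (α ^ 2 * ((u - a) * (u - b))) =
        α ^ 2 * ((u * (u - b)) * ((u - 1) * (a - u))) := by ring
    rw [e1]
    have hX : (0:ℝ) ≤ (u - 1) * (a - u) :=
      mul_nonneg (by linarith [hu.1]) (by linarith [hu.2])
    have hY : 1 - b ≤ u * (u - b) := by
      nlinarith [mul_nonneg (by linarith [hu.1] : (0:ℝ) ≤ u - 1)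
        (by linarith [hu.1] : (0:ℝ) ≤ u - b)]
    nlinarith [mul_le_mul_of_nonneg_right hY hX, hα2]
  -- integrability on [0, b]
  have hint2 : IntegrableOn g (Set.Icc 0 b) := by
    rw [hg_def]
    apply integrable_helper hb0 (mul_pos hα2 (mul_pos (by linarith : (0:ℝ) < 1 - b)
      (by linarith : (0:ℝ) < a - b))) hc_inner
    intro w hw
    rw [hQ w]
    have e1 : w * (1 - w) * (α ^ 2 * ((w - a) * (w - b))) =
        α ^ 2 * (((1 - w) * (a - w)) * (w * (b - w))) := by ring
    rw [e1]
    have hX : (0:ℝ) ≤ w * (b - w) :=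
      mul_nonneg (by linarith [hw.1]) (by linarith [hw.2])
    have hY : (1 - b) * (a - b) ≤ (1 - w) * (a - w) := by
      nlinarith [mul_nonneg (by linarith [hw.2] : (0:ℝ) ≤ b - w)
        (by linarith [hw.2] : (0:ℝ) ≤ a - w),
        mul_nonneg (by linarith : (0:ℝ) ≤ 1 - b)
        (by linarith [hw.2] : (0:ℝ) ≤ b - w)]
    nlinarith [mul_le_mul_of_nonneg_right hY hX, hα2]
  -- pointwise identity
  have hpt : ∀ w ∈ Set.Icc (0:ℝ) b, φd w • (g ∘ φ) w = g w := by
    intro w hw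
    have htw := ht w hw.1 hw.2
    have hc0 : 0 < -(1 + α) / (1 + α * w) ^ 2 := div_pos (by linarith) (by positivity)
    simp only [Function.comp, smul_eq_mul, hg_def, hφ_def, hφd_def]
    have hkey : (1 - w) / (1 + α * w) * (1 - (1 - w) / (1 + α * w)) *
        (α ^ 2 * ((1 - w) / (1 + α * w)) ^ 2 + α * (4 - α) * ((1 - w) / (1 + α * w)) + 4) =
        (-(1 + α) / (1 + α * w) ^ 2) ^ 2 *
          (w * (1 - w) * (α ^ 2 * w ^ 2 + α * (4 - α) * w + 4)) := by
      field_simp [htw.ne', (by linarith : 1 + w * α ≠ 0)]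
      ring
    rw [hkey, Real.sqrt_mul (sq_nonneg _), Real.sqrt_sq hc0.le, one_div, one_div, mul_inv,
      ← mul_assoc, mul_inv_cancel₀ hc0.ne', one_mul]
  -- continuity hypotheses
  have hcφ : ContinuousOn φ (Set.uIcc 0 b) := by
    rw [Set.uIcc_of_le hb0.le]
    intro w hw
    exact (hderiv w (ht w hw.1 hw.2).ne').continuousAt.continuousWithinAt
  have hff' : ∀ x ∈ Set.Ioo (min (0:ℝ) b) (max 0 b), HasDerivWithinAt φ (φd x) (Set.Ioi x) x := by
    intro x hx
    rw [min_eq_left hb0.le, max_eq_right hb0.le] at hx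
    exact (hderiv x (ht x hx.1.le hx.2.le).ne').hasDerivWithinAt
  have hcontg : ContinuousOn g (φ '' Set.Ioo (min (0:ℝ) b) (max 0 b)) := by
    rw [min_eq_left hb0.le, max_eq_right hb0.le]
    rintro u ⟨w, hw, rfl⟩
    have hu' := hmapsIoo w hw
    have hP := hPpos _ hu'
    apply ContinuousAt.continuousWithinAt
    rw [hg_def]
    exact continuousAt_const.div ((Real.continuous_sqrt.comp hc_inner).continuousAt)
      (ne_of_gt (Real.sqrt_pos.2 hP))
  have hg1 : IntegrableOn g (φ '' Set.uIcc 0 b) := by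
    apply hint1.mono_set
    rw [Set.uIcc_of_le hb0.le]
    rintro u ⟨w, hw, rfl⟩
    exact hmapsIcc w hw
  have hg2 : IntegrableOn (fun x => φd x • (g ∘ φ) x) (Set.uIcc 0 b) := by
    rw [Set.uIcc_of_le hb0.le]
    exact hint2.congr_fun (fun w hw => (hpt w hw).symm) measurableSet_Icc
  have hsub := intervalIntegral.integral_comp_smul_deriv''' hcφ hff' hcontg hg1 hg2
  have hφ0 : φ 0 = 1 := by simp [hφ_def]
  have hφb2 : φ b = a := by
    rw [hφ_def]
    simp only
    rw [div_eq_iff htb.ne']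
    linarith [hφb_mul]
  rw [hφ0, hφb2] at hsub
  have hLHS : (∫ x in (0:ℝ)..b, φd x • (g ∘ φ) x) = ∫ x in (0:ℝ)..b, g x :=
    intervalIntegral.integral_congr (fun w hw => hpt w (by rwa [Set.uIcc_of_le hb0.le] at hw))
  rw [hLHS] at hsub
  rw [show (∫ w in (0:ℝ)..b, g w) = ∫ x in (1:ℝ)..a, g x from hsub]
  exact (intervalIntegral.integral_symm a 1).symm
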